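/- arXiv:math/0108112 — 5 statements merged into one kernel-verified Lean document; each statement's English description precedes it below -/
import Mathlib

section
/- The Hecke matrix S satisfies the Hecke condition S² = ω·S + I_{n²}. -/
open Matrix Kronecker

/-- The Hecke matrix `S = q·Σᵢ E_{ii}⊗E_{ii} + Σ_{i≠j} E_{ij}⊗E_{ji} + (q−q⁻¹)·Σ_{i<j} E_{ii}⊗E_{jj}`
in `M_{n²}(K)` (Kronecker identification). -/
noncomputable def heckeS (K : Type*) [Field K] (n : ℕ) (q : K) :
    Matrix (Fin n × Fin n) (Fin n × Fin n) K :=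
  q • (∑ i : Fin n, Matrix.single i i (1 : K) ⊗ₖ Matrix.single i i (1 : K))
    + ∑ i : Fin n, ∑ j : Fin n,
        (if i ≠ j then Matrix.single i j (1 : K) ⊗ₖ Matrix.single j i (1 : K) else 0)
    + (q - q⁻¹) • ∑ i : Fin n, ∑ j : Fin n,
        (if i < j then Matrix.single i i (1 : K) ⊗ₖ Matrix.single j j (1 : K) else 0)

section HeckeAux

variable {K : Type*} [Field K] {n : ℕ}

/-- Diagonal coefficient of the Hecke matrix on the pair `(a, b)`. -/
noncomputable def sα (q : K) (a b : Fin n) : K :=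
  if a = b then q else if a < b then q - q⁻¹ else 0

/-- Off-diagonal coefficient of the Hecke matrix on the pair `(a, b)`. -/
noncomputable def sβ (a b : Fin n) : K := if a = b then 0 else 1

lemma sum_sum_eq (f : Fin n → Fin n → K) (a b : Fin n)
    (h : ∀ x y, f x y ≠ 0 → x = a ∧ y = b) : ∑ x, ∑ y, f x y = f a b := by
  rw [Finset.sum_eq_single a]
  · rw [Finset.sum_eq_single b]
    · intro y _ hy
      by_contra hne
      exact hy (h a y hne).2
    · simp
  · intro x _ hx
    apply Finset.sum_eq_zero
    intro y _
    by_contra hne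
    exact hx (h x y hne).1
  · simp

set_option maxHeartbeats 4000000 in
set_option maxRecDepth 10000 in
lemma heckeS_apply (q : K) (p r : Fin n × Fin n) :
    heckeS K n q p r =
      (if r = p then sα q p.1 p.2 else 0) + (if r = (p.2, p.1) then sβ p.1 p.2 else 0) := by
  obtain ⟨a, b⟩ := p
  obtain ⟨c, d⟩ := r
  simp only [heckeS, sα, sβ, Matrix.add_apply, Matrix.smul_apply, Matrix.sum_apply,
    apply_ite (fun M : Matrix (Fin n × Fin n) (Fin n × Fin n) K => M (a,b) (c,d)),
    Matrix.kroneckerMap_apply, Matrix.single, Matrix.of_apply, ite_mul, one_mul, zero_mul,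
    mul_ite, mul_one, mul_zero, Matrix.zero_apply, Prod.mk.injEq, smul_eq_mul, ite_and,
    Finset.sum_ite_eq, Finset.sum_ite_eq', Finset.mem_univ, if_true]
  rw [sum_sum_eq _ a b (by intro x y h; constructor <;> (by_contra hne; apply h; split_ifs <;> simp_all)),
      sum_sum_eq _ a b (by intro x y h; constructor <;> (by_contra hne; apply h; split_ifs <;> simp_all))]
  simp only [eq_self_iff_true, if_true, ne_eq, lt_self_iff_false, if_false, ite_self]
  split_ifs <;> first | rfl | (exfalso; omega) | ring1

end HeckeAux

set_option maxHeartbeats 4000000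

/-- The Hecke matrix satisfies the Hecke condition `S² = (q − q⁻¹)·S + I`. -/
theorem hecke_condition (K : Type*) [Field K] (n : ℕ) (hn : 1 ≤ n) (q : K) (hq : q ≠ 0) :
    heckeS K n q * heckeS K n q = (q - q⁻¹) • heckeS K n q + 1 := by
  ext p r
  rw [Matrix.mul_apply]
  simp only [heckeS_apply, add_mul, ite_mul, zero_mul, Finset.sum_add_distrib,
    Finset.sum_ite_eq', Finset.mem_univ, if_true, Matrix.add_apply, Matrix.smul_apply,
    Matrix.one_apply, smul_eq_mul]
  obtain ⟨a, b⟩ := p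
  obtain ⟨e, f⟩ := r
  simp only [sα, sβ, Prod.mk.injEq, mul_ite, mul_zero, mul_one]
  have h1 : q⁻¹ * q = 1 := inv_mul_cancel₀ hq
  split_ifs <;> first | (exfalso; omega) | ring1 | (field_simp; try ring1)
end

section
/- Assume 1 + q² ≠ 0 in K. The linear operator τ on Kⁿ⊗Kⁿ defined on the standard basis by τ(eᵢ⊗eⱼ) = sgn(j−i)·((1−q²)/(1+q²))·eᵢ⊗eⱼ + (2q/(1+q²))·eⱼ⊗eᵢ for i ≠ j, and τ(eᵢ⊗eᵢ) = eᵢ⊗eᵢ, is an involution: τ∘τ = id. -/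
open Matrix

/-- The matrix of the permutation `τ = τ_{V⊗V}` on `Kⁿ⊗Kⁿ` in the standard basis:
`τ(eᵢ⊗eⱼ) = sgn(j−i)·((1−q²)/(1+q²))·eᵢ⊗eⱼ + (2q/(1+q²))·eⱼ⊗eᵢ` for `i ≠ j`, and
`τ(eᵢ⊗eᵢ) = eᵢ⊗eᵢ`.  The entry `tauVV (k,l) (i,j)` is the coefficient of `e_k⊗e_l`
in `τ(eᵢ⊗eⱼ)`. -/
noncomputable def tauVV (K : Type*) [Field K] (n : ℕ) (q : K) :
    Matrix (Fin n × Fin n) (Fin n × Fin n) K :=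
  Matrix.of fun kl ij =>
    if ij.1 = ij.2 then (if kl = ij then 1 else 0)
    else
      (if (ij.1 : ℕ) < (ij.2 : ℕ) then (1 : K) else -1) * ((1 - q ^ 2) / (1 + q ^ 2))
          * (if kl = ij then 1 else 0)
        + (2 * q / (1 + q ^ 2)) * (if kl = (ij.2, ij.1) then 1 else 0)

/-- The square of the matrix `tauVV` is the identity matrix. -/
theorem tauVV_sq (K : Type*) [Field K] (n : ℕ)
    (q : K) (h : (1 : K) + q ^ 2 ≠ 0) :
    tauVV K n q * tauVV K n q = 1 := by
  ext ⟨k, l⟩ ⟨i, j⟩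
  rw [Matrix.mul_apply]
  by_cases hij : i = j
  · subst hij
    simp only [tauVV, Matrix.of_apply, if_pos rfl, Matrix.one_apply, mul_ite, mul_one, mul_zero,
      Finset.sum_ite_eq', Finset.mem_univ, if_true]
  · have hji : j ≠ i := Ne.symm hij
    simp only [tauVV, Matrix.of_apply, if_neg hij, if_neg hji, Matrix.one_apply,
      mul_add, mul_ite, mul_one, mul_zero, Finset.sum_add_distrib,
      Finset.sum_ite_eq', Finset.mem_univ, if_true]
    have hij' : (i : ℕ) ≠ (j : ℕ) := fun e => hij (Fin.ext e)
    have hne1 : ((i, j) : Fin n × Fin n) ≠ (j, i) := fun e => hij (congrArg Prod.fst e)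
    have hne2 : ((j, i) : Fin n × Fin n) ≠ (i, j) := fun e => hji (congrArg Prod.fst e)
    rcases lt_or_gt_of_ne hij' with hlt | hlt
    · rw [if_pos hlt, if_neg (not_lt_of_gt hlt)]
      by_cases h1 : (k, l) = (i, j)
      · rw [Prod.mk.injEq] at h1; obtain ⟨rfl, rfl⟩ := h1
        simp only [Prod.mk.injEq, hij, hji, if_pos rfl, and_self, and_false, false_and,
          if_false, if_true, ite_true, ite_false, ite_self]
        field_simp
        ring
      · by_cases h2 : (k, l) = (j, i)
        · rw [Prod.mk.injEq] at h2; obtain ⟨rfl, rfl⟩ := h2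
          simp only [Prod.mk.injEq, hij, hji, if_pos rfl, and_self, and_false, false_and,
            if_false, if_true, ite_true, ite_false, ite_self]
          ring
        · simp only [h1, h2, if_false, ite_false]
          ring
    · rw [if_neg (not_lt_of_gt hlt), if_pos hlt]
      by_cases h1 : (k, l) = (i, j)
      · rw [Prod.mk.injEq] at h1; obtain ⟨rfl, rfl⟩ := h1
        simp only [Prod.mk.injEq, hij, hji, if_pos rfl, and_self, and_false, false_and,
          if_false, if_true, ite_true, ite_false, ite_self]
        field_simp
        ring
      · by_cases h2 : (k, l) = (j, i)
        · rw [Prod.mk.injEq] at h2; obtain ⟨rfl, rfl⟩ := h2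
          simp only [Prod.mk.injEq, hij, hji, if_pos rfl, and_self, and_false, false_and,
            if_false, if_true, ite_true, ite_false, ite_self]
          ring
        · simp only [h1, h2, if_false, ite_false]
          ring

/-- The linear operator `τ` on `Kⁿ⊗Kⁿ` is an involution: `τ ∘ τ = id`
(assuming `1 + q² ≠ 0`). -/
theorem tauVV_involutive (K : Type*) [Field K] (n : ℕ) (hn : 1 ≤ n)
    (q : K) (hq : q ≠ 0) (h : (1 : K) + q ^ 2 ≠ 0) :
    Matrix.toLin' (tauVV K n q) ∘ₗ Matrix.toLin' (tauVV K n q) = LinearMap.id := by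
  rw [← Matrix.toLin'_mul, tauVV_sq K n q h, Matrix.toLin'_one]
end

section
/- For every 1 ≤ k ≤ n the following two identities hold in M_{n²}(K): (P_k ⊗ Iₙ)·R = (P_k⊗P_k)·R·(P_k⊗P_k) + P_k ⊗ (Iₙ − P_k), and R·(Iₙ ⊗ P_k) = (P_k⊗P_k)·R·(P_k⊗P_k) + (Iₙ − P_k) ⊗ P_k, where P_k = Σ_{i=1}^{k} E_{ii}. -/
open Matrix Kronecker

/-- The R-matrix `R = q·Σᵢ E_{ii}⊗E_{ii} + Σ_{i≠j} E_{ii}⊗E_{jj} + (q−q⁻¹)·Σ_{i<k} E_{ki}⊗E_{ik}`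
(overall scalar `q^{−1/n}` omitted). -/
noncomputable def Rmat (K : Type*) [Field K] (n : ℕ) (q : K) :
    Matrix (Fin n × Fin n) (Fin n × Fin n) K :=
  q • (∑ i : Fin n, Matrix.single i i (1 : K) ⊗ₖ Matrix.single i i (1 : K))
    + ∑ i : Fin n, ∑ j : Fin n,
        (if i ≠ j then Matrix.single i i (1 : K) ⊗ₖ Matrix.single j j (1 : K) else 0)
    + (q - q⁻¹) • ∑ i : Fin n, ∑ k : Fin n,
        (if i < k then Matrix.single k i (1 : K) ⊗ₖ Matrix.single i k (1 : K) else 0)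

/-- The rank-`k` projector `P_k = Σ_{i=1}^{k} E_{ii}` (0-indexed: `i < k`). -/
def rankProj (K : Type*) [Field K] (n k : ℕ) : Matrix (Fin n) (Fin n) K :=
  Matrix.diagonal fun i => if (i : ℕ) < k then 1 else 0

private lemma sum1_apply (K : Type*) [Field K] (n : ℕ) (a b c d : Fin n) :
    (∑ i : Fin n, Matrix.single i i (1 : K) ⊗ₖ Matrix.single i i (1 : K)) (a,b) (c,d)
      = if a = c ∧ b = d ∧ a = b then 1 else 0 := by
  simp only [Matrix.sum_apply, kroneckerMap_apply, Matrix.single, of_apply]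
  rw [Finset.sum_eq_single a]
  · split_ifs <;> aesop
  · intro i _ hi; split_ifs <;> aesop
  · simp

private lemma sum2_apply (K : Type*) [Field K] (n : ℕ) (a b c d : Fin n) :
    (∑ i : Fin n, ∑ j : Fin n,
        (if i ≠ j then Matrix.single i i (1 : K) ⊗ₖ Matrix.single j j (1 : K) else 0)) (a,b) (c,d)
      = if a = c ∧ b = d ∧ a ≠ b then 1 else 0 := by
  simp only [Matrix.sum_apply]
  rw [Finset.sum_eq_single a, Finset.sum_eq_single b]
  · split_ifs with h1 h2 <;>
      simp_all [kroneckerMap_apply, Matrix.single, of_apply] <;> first | omega | aesop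
  · intro j _ hj; split_ifs <;> simp_all [kroneckerMap_apply, Matrix.single, of_apply]
  · simp
  · intro i _ hi
    apply Finset.sum_eq_zero; intro j _
    split_ifs <;> simp_all [kroneckerMap_apply, Matrix.single, of_apply]
  · simp

private lemma sum3_apply (K : Type*) [Field K] (n : ℕ) (a b c d : Fin n) :
    (∑ i : Fin n, ∑ m : Fin n,
        (if i < m then Matrix.single m i (1 : K) ⊗ₖ Matrix.single i m (1 : K) else 0)) (a,b) (c,d)
      = if a = d ∧ b = c ∧ b < a then 1 else 0 := by
  simp only [Matrix.sum_apply]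
  rw [Finset.sum_eq_single b, Finset.sum_eq_single a]
  · split_ifs with h1 h2 <;>
      simp_all [kroneckerMap_apply, Matrix.single, of_apply] <;> first | omega | aesop
  · intro m _ hm; split_ifs <;> simp_all [kroneckerMap_apply, Matrix.single, of_apply]
  · simp
  · intro i _ hi
    apply Finset.sum_eq_zero; intro m _
    split_ifs <;> simp_all [kroneckerMap_apply, Matrix.single, of_apply]
  · simp

private lemma Rmat_apply (K : Type*) [Field K] (n : ℕ) (q : K) (a b c d : Fin n) :
    Rmat K n q (a,b) (c,d)
      = (if a = c ∧ b = d then (if a = b then q else 1) else 0)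
        + (q - q⁻¹) * (if a = d ∧ b = c ∧ b < a then 1 else 0) := by
  simp only [Rmat, Matrix.add_apply, Matrix.smul_apply, sum1_apply, sum2_apply, sum3_apply,
    smul_eq_mul]
  by_cases h1 : a = c ∧ b = d
  · obtain ⟨rfl, rfl⟩ := h1
    by_cases h2 : a = b
    · subst h2
      simp [lt_irrefl]
    · have h3 : ¬(a = b ∧ b = a ∧ b < a) := by rintro ⟨rfl, -, -⟩; exact h2 rfl
      simp [h2, h3]
  · have e1 : ¬(a = c ∧ b = d ∧ a = b) := fun ⟨x, y, _⟩ => h1 ⟨x, y⟩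
    have e2 : ¬(a = c ∧ b = d ∧ a ≠ b) := fun ⟨x, y, _⟩ => h1 ⟨x, y⟩
    simp [h1, e1, e2]

set_option maxHeartbeats 1000000 in
/-- The identities `(P_k⊗I)·R = (P_k⊗P_k)·R·(P_k⊗P_k) + P_k⊗(I−P_k)` and
`R·(I⊗P_k) = (P_k⊗P_k)·R·(P_k⊗P_k) + (I−P_k)⊗P_k`. -/
theorem rankProj_R_identities (K : Type*) [Field K] (n : ℕ) (q : K) (hq : q ≠ 0)
    (k : ℕ) (hk : 1 ≤ k) (hkn : k ≤ n) :
    (rankProj K n k ⊗ₖ (1 : Matrix (Fin n) (Fin n) K)) * Rmat K n q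
      = (rankProj K n k ⊗ₖ rankProj K n k) * Rmat K n q
          * (rankProj K n k ⊗ₖ rankProj K n k)
        + rankProj K n k ⊗ₖ ((1 : Matrix (Fin n) (Fin n) K) - rankProj K n k) ∧
    Rmat K n q * ((1 : Matrix (Fin n) (Fin n) K) ⊗ₖ rankProj K n k)
      = (rankProj K n k ⊗ₖ rankProj K n k) * Rmat K n q
          * (rankProj K n k ⊗ₖ rankProj K n k)
        + ((1 : Matrix (Fin n) (Fin n) K) - rankProj K n k) ⊗ₖ rankProj K n k := by
  set p : Fin n → K := fun i => if (i : ℕ) < k then 1 else 0 with hp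
  have hP : rankProj K n k = diagonal p := rfl
  have hone : (1 : Matrix (Fin n) (Fin n) K) = diagonal (fun _ => 1) := (diagonal_one).symm
  have h1 : rankProj K n k ⊗ₖ (1 : Matrix (Fin n) (Fin n) K)
      = diagonal (fun x : Fin n × Fin n => p x.1) := by
    rw [hP, hone, diagonal_kronecker_diagonal]; simp
  have h2 : (1 : Matrix (Fin n) (Fin n) K) ⊗ₖ rankProj K n k
      = diagonal (fun x : Fin n × Fin n => p x.2) := by
    rw [hP, hone, diagonal_kronecker_diagonal]; simp
  have h3 : rankProj K n k ⊗ₖ rankProj K n k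
      = diagonal (fun x : Fin n × Fin n => p x.1 * p x.2) := by
    rw [hP, diagonal_kronecker_diagonal]
  have h4 : rankProj K n k ⊗ₖ ((1 : Matrix (Fin n) (Fin n) K) - rankProj K n k)
      = diagonal (fun x : Fin n × Fin n => p x.1 * (1 - p x.2)) := by
    rw [hP, hone, diagonal_sub, diagonal_kronecker_diagonal]
  have h5 : ((1 : Matrix (Fin n) (Fin n) K) - rankProj K n k) ⊗ₖ rankProj K n k
      = diagonal (fun x : Fin n × Fin n => (1 - p x.1) * p x.2) := by
    rw [hP, hone, diagonal_sub, diagonal_kronecker_diagonal]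
  constructor <;>
  · ext ⟨a, b⟩ ⟨c, d⟩
    simp only [h1, h2, h3, h4, h5, Matrix.add_apply, diagonal_mul, mul_diagonal,
      diagonal_apply, Rmat_apply, Prod.mk.injEq]
    by_cases hcd1 : a = c ∧ b = d
    · obtain ⟨rfl, rfl⟩ := hcd1
      by_cases hab : a = b
      · subst hab
        by_cases ha : (a : ℕ) < k <;> (try simp [hp, ha, lt_irrefl]) <;> first | rfl | ring1
      · have h3' : ¬(a = b ∧ b = a ∧ b < a) := by rintro ⟨rfl, -, -⟩; exact hab rfl
        by_cases ha : (a : ℕ) < k <;> by_cases hb : (b : ℕ) < k <;>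
          (try simp [hp, ha, hb, hab, h3']) <;> first | rfl | ring1
    · by_cases hw : a = d ∧ b = c ∧ b < a
      · obtain ⟨rfl, rfl, hlt⟩ := hw
        have hba : (b : ℕ) < (a : ℕ) := hlt
        by_cases ha : (a : ℕ) < k <;> by_cases hb : (b : ℕ) < k <;>
          (try simp [hp, ha, hb, hlt, hcd1]) <;>
          first | rfl | ring1 | (exfalso; omega) | (intro h; exfalso; omega)
      · simp [hcd1, hw]
end

section
/- Let λ₁,…,λₙ ∈ K and suppose there is c ∈ K with λᵢ·λ_{n+1−i} = c for all i = 1,…,n. Then the skew-diagonal matrix A ∈ Mₙ(K) with entries A_{n+1−i, i} = λᵢ and all other entries zero satisfies the numeric reflection equation, and moreover A² = c·Iₙ. -/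
open Matrix Kronecker

/-- The skew-diagonal matrix with `A_{n+1−i,i} = λᵢ` (0-indexed: `A_{r,c} = λ_c` when
`r + c + 1 = n`) and all other entries zero. -/
def skewDiag {K : Type*} [Zero K] (n : ℕ) (lam : Fin n → K) : Matrix (Fin n) (Fin n) K :=
  Matrix.of fun r c => if (r : ℕ) + (c : ℕ) + 1 = n then lam c else 0

section Aux

variable {K : Type*} [Field K] {n : ℕ} {q : K} {lam : Fin n → K} {c : K}

lemma heckeS_apply_s8 (a b c d : Fin n) : heckeS K n q (a,b) (c,d) =
    (if a = b ∧ c = a ∧ d = a then q else 0)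
    + (if a ≠ b ∧ c = b ∧ d = a then 1 else 0)
    + (if a < b ∧ c = a ∧ d = b then q - q⁻¹ else 0) := by
  have h1 : (∑ i : Fin n, Matrix.single i i (1:K) ⊗ₖ Matrix.single i i 1) (a,b) (c,d)
      = if a = b ∧ c = a ∧ d = a then 1 else 0 := by
    simp only [Matrix.sum_apply, kroneckerMap_apply, Matrix.single, of_apply, ite_mul, one_mul,
      zero_mul]
    rw [Finset.sum_eq_single a]
    · split_ifs <;> aesop
    · intro i _ hi; split_ifs <;> aesop
    · simp
  have h2 : (∑ i : Fin n, ∑ j : Fin n,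
        (if i ≠ j then Matrix.single i j (1:K) ⊗ₖ Matrix.single j i 1 else 0)) (a,b) (c,d)
      = if a ≠ b ∧ c = b ∧ d = a then 1 else 0 := by
    simp only [Matrix.sum_apply, kroneckerMap_apply, Matrix.single, of_apply, ite_mul, one_mul,
      zero_mul, ite_apply, Matrix.zero_apply]
    rw [Finset.sum_eq_single a]
    · rw [Finset.sum_eq_single b]
      · split_ifs <;> aesop
      · intro j _ hj; split_ifs <;> aesop
      · simp
    · intro i _ hi; rw [Finset.sum_eq_zero]; intro j _; split_ifs <;> aesop
    · simp
  have h3 : (∑ i : Fin n, ∑ j : Fin n,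
        (if i < j then Matrix.single i i (1:K) ⊗ₖ Matrix.single j j 1 else 0)) (a,b) (c,d)
      = if a < b ∧ c = a ∧ d = b then 1 else 0 := by
    simp only [Matrix.sum_apply, kroneckerMap_apply, Matrix.single, of_apply, ite_mul, one_mul,
      zero_mul, ite_apply, Matrix.zero_apply]
    rw [Finset.sum_eq_single a]
    · rw [Finset.sum_eq_single b]
      · split_ifs <;> aesop
      · intro j _ hj; split_ifs <;> aesop
      · simp
    · intro i _ hi; rw [Finset.sum_eq_zero]; intro j _; split_ifs <;> aesop
    · simp
  simp only [heckeS, Matrix.add_apply, Matrix.smul_apply, h1, h2, h3, smul_ite, smul_eq_mul,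
    mul_one, mul_zero, smul_zero]
  ring_nf
  split_ifs <;> ring

lemma skewDiag_apply (r s : Fin n) :
    skewDiag n lam r s = if s = Fin.rev r then lam s else 0 := by
  have hr := r.isLt; have hs := s.isLt
  have : ((r : ℕ) + (s : ℕ) + 1 = n) ↔ s = Fin.rev r := by
    rw [Fin.ext_iff, Fin.val_rev]; omega
  simp only [skewDiag, of_apply, this]

lemma A2_mul (M : Matrix (Fin n × Fin n) (Fin n × Fin n) K) (a b : Fin n) (p : Fin n × Fin n) :
    (((1 : Matrix (Fin n) (Fin n) K) ⊗ₖ skewDiag n lam) * M) (a, b) p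
      = lam b.rev * M (a, b.rev) p := by
  rw [mul_apply, Fintype.sum_prod_type]
  rw [Finset.sum_eq_single a]
  · rw [Finset.sum_eq_single b.rev]
    · simp [kroneckerMap_apply, skewDiag_apply]
    · intro d _ hd; simp [kroneckerMap_apply, skewDiag_apply, hd]
    · simp
  · intro i _ hi
    rw [Finset.sum_eq_zero]; intro d _
    simp [kroneckerMap_apply, one_apply, (Ne.symm hi)]
  · simp

lemma mul_A2 (M : Matrix (Fin n × Fin n) (Fin n × Fin n) K) (p : Fin n × Fin n) (e f : Fin n) :
    (M * ((1 : Matrix (Fin n) (Fin n) K) ⊗ₖ skewDiag n lam)) p (e, f)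
      = lam f * M p (e, f.rev) := by
  rw [mul_apply, Fintype.sum_prod_type]
  rw [Finset.sum_eq_single e]
  · rw [Finset.sum_eq_single f.rev]
    · simp [kroneckerMap_apply, skewDiag_apply, Fin.rev_rev, mul_comm]
    · intro d _ hd
      have hfd : f ≠ d.rev := fun h => hd (by rw [h, Fin.rev_rev])
      simp [kroneckerMap_apply, skewDiag_apply, hfd]
    · simp
  · intro i _ hi
    rw [Finset.sum_eq_zero]; intro d _
    simp [kroneckerMap_apply, one_apply, hi]
  · simp

lemma mul_heckeS (M : Matrix (Fin n × Fin n) (Fin n × Fin n) K) (p : Fin n × Fin n) (g h : Fin n) :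
    (M * heckeS K n q) p (g, h)
      = q * (if g = h then M p (g,g) else 0) + (if g ≠ h then M p (h,g) else 0)
        + (q - q⁻¹) * (if g < h then M p (g,h) else 0) := by
  rw [mul_apply, Fintype.sum_prod_type]
  simp only [heckeS_apply_s8, mul_add, Finset.sum_add_distrib, mul_ite, mul_zero, mul_one]
  congr 1
  congr 1
  · rw [Finset.sum_eq_single g]
    · rw [Finset.sum_eq_single g]
      · split_ifs <;> simp_all <;> ring
      · intro f _ hf; split_ifs <;> simp_all
      · simp
    · intro e _ he; rw [Finset.sum_eq_zero]; intro f _; split_ifs <;> simp_all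
    · simp
  · rw [Finset.sum_eq_single h]
    · rw [Finset.sum_eq_single g]
      · split_ifs <;> simp_all
      · intro f _ hf; split_ifs <;> simp_all
      · simp
    · intro e _ he; rw [Finset.sum_eq_zero]; intro f _; split_ifs <;> simp_all
    · simp
  · rw [Finset.sum_eq_single g]
    · rw [Finset.sum_eq_single h]
      · split_ifs <;> simp_all <;> ring
      · intro f _ hf; split_ifs <;> simp_all
      · simp
    · intro e _ he; rw [Finset.sum_eq_zero]; intro f _; split_ifs <;> simp_all
    · simp

lemma heckeS_mul (M : Matrix (Fin n × Fin n) (Fin n × Fin n) K) (a b : Fin n) (p : Fin n × Fin n) :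
    (heckeS K n q * M) (a, b) p
      = q * (if a = b then M (a,a) p else 0) + (if a ≠ b then M (b,a) p else 0)
        + (q - q⁻¹) * (if a < b then M (a,b) p else 0) := by
  rw [mul_apply, Fintype.sum_prod_type]
  simp only [heckeS_apply_s8, add_mul, Finset.sum_add_distrib, ite_mul, zero_mul, one_mul]
  congr 1
  congr 1
  · rw [Finset.sum_eq_single a]
    · rw [Finset.sum_eq_single a]
      · split_ifs <;> simp_all <;> ring
      · intro f _ hf; split_ifs <;> simp_all
      · simp
    · intro e _ he; rw [Finset.sum_eq_zero]; intro f _; split_ifs <;> simp_all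
    · simp
  · rw [Finset.sum_eq_single b]
    · rw [Finset.sum_eq_single a]
      · split_ifs <;> simp_all
      · intro f _ hf; split_ifs <;> simp_all
      · simp
    · intro e _ he; rw [Finset.sum_eq_zero]; intro f _; split_ifs <;> simp_all
    · simp
  · rw [Finset.sum_eq_single a]
    · rw [Finset.sum_eq_single b]
      · split_ifs <;> simp_all <;> ring
      · intro f _ hf; split_ifs <;> simp_all
      · simp
    · intro e _ he; rw [Finset.sum_eq_zero]; intro f _; split_ifs <;> simp_all
    · simp

lemma T_apply (hlam : ∀ i : Fin n, lam i * lam i.rev = c) (a b e f : Fin n) :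
    (((1 : Matrix (Fin n) (Fin n) K) ⊗ₖ skewDiag n lam) * heckeS K n q
        * ((1 : Matrix (Fin n) (Fin n) K) ⊗ₖ skewDiag n lam)) (a,b) (e,f)
      = (if e = a ∧ f = b then
            c * ((if a = Fin.rev b then q else 0) + (if a < Fin.rev b then q - q⁻¹ else 0)) else 0)
        + (if a ≠ Fin.rev b ∧ e = Fin.rev b ∧ f = Fin.rev a then
            lam (Fin.rev b) * lam (Fin.rev a) else 0) := by
  rw [mul_A2, A2_mul, heckeS_apply_s8]
  simp only [Fin.rev_eq_iff, Fin.rev_rev]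
  by_cases hP : a = Fin.rev b
  · subst hP
    simp only [lt_irrefl, ne_eq, not_true_eq_false, false_and, if_false, Fin.rev_rev,
      if_pos rfl, true_and, if_true, add_zero, zero_add, and_false]
    split_ifs with h
    · obtain ⟨he, hf⟩ := h; subst hf
      linear_combination q * hlam f
    · ring
  · have hC1 : ¬(a = Fin.rev b ∧ e = a ∧ f = Fin.rev a) := fun h => hP h.1
    rw [if_neg hC1, if_neg hP]
    by_cases hC2 : a ≠ Fin.rev b ∧ e = Fin.rev b ∧ f = Fin.rev a
    · rw [if_pos hC2, if_pos hC2]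
      obtain ⟨-, he2, hf2⟩ := hC2; subst he2; subst hf2
      rw [if_neg (fun h => hP ((h : _ ∧ _).2.1.symm)),
        if_neg (fun h => hP ((h : _ ∧ _).1.symm))]
      ring
    · rw [if_neg hC2, if_neg hC2]
      by_cases hD1 : e = a ∧ f = b
      · rw [if_pos hD1]
        obtain ⟨he, hf⟩ := hD1; subst he; subst hf
        by_cases hL : e < Fin.rev f
        · rw [if_pos ⟨hL, rfl, rfl⟩, if_pos hL]
          linear_combination (q - q⁻¹) * hlam f
        · rw [if_neg (fun h => hL (h : _ ∧ _).1), if_neg hL]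
          ring
      · rw [if_neg hD1, if_neg (fun h => hD1 ⟨(h : _ ∧ _ ∧ _).2.1, (h : _ ∧ _ ∧ _).2.2⟩)]
        ring

-- scalar abbreviation
noncomputable def FF (q c : K) (lam : Fin n → K) (a b e f : Fin n) : K :=
  (if e = a ∧ f = b then
      c * ((if a = Fin.rev b then q else 0) + (if a < Fin.rev b then q - q⁻¹ else 0)) else 0)
    + (if a ≠ Fin.rev b ∧ e = Fin.rev b ∧ f = Fin.rev a then
        lam (Fin.rev b) * lam (Fin.rev a) else 0)

lemma FF_diag_zero (hab : a ≠ b) (g : Fin n) : FF q c lam a b g g = 0 := by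
  unfold FF
  rw [if_neg, if_neg]
  · ring
  · rintro ⟨-, h1, h2⟩; exact hab (Fin.rev_injective (h1 ▸ h2 ▸ rfl))
  · rintro ⟨h1, h2⟩; exact hab (h1 ▸ h2 ▸ rfl)

lemma FF_swap (hab : a ≠ b) (g h : Fin n) : FF q c lam a b h g = FF q c lam b a g h := by
  unfold FF
  have e1 : (b = Fin.rev a) ↔ (a = Fin.rev b) := by rw [eq_comm, Fin.rev_eq_iff]
  have e2 : (b < Fin.rev a) ↔ (a < Fin.rev b) := by rw [← Fin.lt_rev_iff]
  have e3 : (h = a ∧ g = b) ↔ (g = b ∧ h = a) := and_comm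
  have e4 : (a ≠ Fin.rev b ∧ h = Fin.rev b ∧ g = Fin.rev a)
      ↔ (b ≠ Fin.rev a ∧ g = Fin.rev a ∧ h = Fin.rev b) := by
    rw [ne_eq, ne_eq, e1]; tauto
  simp only [e3, e4, e1, e2, mul_comm (lam (Fin.rev b))]

lemma FF_lt (hab : a ≠ b) (g h : Fin n) :
    (if g < h then FF q c lam a b g h else 0) = (if a < b then FF q c lam a b g h else 0) := by
  unfold FF
  by_cases h1 : g = a ∧ h = b
  · obtain ⟨rfl, rfl⟩ := h1; rfl
  · by_cases h2 : a ≠ Fin.rev b ∧ g = Fin.rev b ∧ h = Fin.rev a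
    · obtain ⟨hne, rfl, rfl⟩ := h2
      simp only [Fin.rev_lt_rev]
    · rw [if_neg h1, if_neg h2]
      simp

lemma FF_eq_zero_of_diag (g h : Fin n) (hgh : g ≠ h) : FF q c lam a a g h = 0 := by
  unfold FF
  rw [if_neg, if_neg]
  · ring
  · rintro ⟨-, h1, h2⟩; exact hgh (h1 ▸ h2 ▸ rfl)
  · rintro ⟨h1, h2⟩; exact hgh (h1 ▸ h2 ▸ rfl)

lemma key (hlam : ∀ i : Fin n, lam i * lam i.rev = c) :
    (((1 : Matrix (Fin n) (Fin n) K) ⊗ₖ skewDiag n lam) * heckeS K n q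
        * ((1 : Matrix (Fin n) (Fin n) K) ⊗ₖ skewDiag n lam)) * heckeS K n q
      = heckeS K n q * (((1 : Matrix (Fin n) (Fin n) K) ⊗ₖ skewDiag n lam) * heckeS K n q
        * ((1 : Matrix (Fin n) (Fin n) K) ⊗ₖ skewDiag n lam)) := by
  ext ⟨a, b⟩ ⟨g, h⟩
  rw [mul_heckeS, heckeS_mul]
  simp only [T_apply hlam]
  show q * (if g = h then FF q c lam a b g g else 0) + (if g ≠ h then FF q c lam a b h g else 0)
      + (q - q⁻¹) * (if g < h then FF q c lam a b g h else 0)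
    = q * (if a = b then FF q c lam a a g h else 0) + (if a ≠ b then FF q c lam b a g h else 0)
      + (q - q⁻¹) * (if a < b then FF q c lam a b g h else 0)
  by_cases hab : a = b
  · subst hab
    rw [if_pos rfl, if_neg (lt_irrefl a), if_neg (fun hh : a ≠ a => hh rfl)]
    by_cases hgh : g = h
    · subst hgh
      rw [if_pos rfl, if_neg (lt_irrefl g), if_neg (fun hh : g ≠ g => hh rfl)]
    · rw [if_neg hgh, if_pos hgh, FF_eq_zero_of_diag g h hgh,
        FF_eq_zero_of_diag h g (Ne.symm hgh)]
      simp
  · rw [if_neg hab, if_pos hab]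
    by_cases hgh : g = h
    · subst hgh
      rw [FF_lt hab, FF_diag_zero hab g, FF_diag_zero (Ne.symm hab) g]
      simp
    · rw [if_neg hgh, if_pos hgh, FF_lt hab, FF_swap hab g h]

lemma skewDiag_sq (hlam : ∀ i : Fin n, lam i * lam i.rev = c) :
    skewDiag n lam * skewDiag n lam = c • (1 : Matrix (Fin n) (Fin n) K) := by
  ext r s
  rw [mul_apply, Finset.sum_eq_single (Fin.rev r)]
  · rw [skewDiag_apply, skewDiag_apply, if_pos rfl, Fin.rev_rev]
    by_cases hrs : s = r
    · subst hrs
      rw [if_pos rfl, Matrix.smul_apply, one_apply_eq, smul_eq_mul, mul_comm]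
      linear_combination hlam s
    · rw [if_neg hrs, Matrix.smul_apply, one_apply_ne (Ne.symm hrs), mul_zero, smul_zero]
  · intro t _ ht
    rw [skewDiag_apply, if_neg ht, zero_mul]
  · simp

end Aux

/-- If `λᵢ·λ_{n+1−i} = c` for all `i`, the skew-diagonal matrix with entries `λᵢ` satisfies
the numeric reflection equation and squares to `c·Iₙ`. -/
theorem skewDiag_reflection (K : Type*) [Field K] (n : ℕ) (hn : 1 ≤ n) (q : K) (hq : q ≠ 0)
    (lam : Fin n → K) (c : K) (hlam : ∀ i : Fin n, lam i * lam i.rev = c) :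
    ((1 : Matrix (Fin n) (Fin n) K) ⊗ₖ skewDiag n lam) * heckeS K n q
        * ((1 : Matrix (Fin n) (Fin n) K) ⊗ₖ skewDiag n lam) * heckeS K n q
      = heckeS K n q * ((1 : Matrix (Fin n) (Fin n) K) ⊗ₖ skewDiag n lam)
        * heckeS K n q * ((1 : Matrix (Fin n) (Fin n) K) ⊗ₖ skewDiag n lam) ∧
    skewDiag n lam * skewDiag n lam = c • (1 : Matrix (Fin n) (Fin n) K) := by
  constructor
  · have h := key (q := q) hlam
    simp only [mul_assoc] at h ⊢
    exact h
  · exact skewDiag_sq hlam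
end

section
/- Let C be a commutative unital K-algebra, t ∈ C, and assume the quantum integers k̂_q are nonzero in K for 1 ≤ k ≤ m. Define σ⁰ = 1 and, recursively, σ^k = (k̂_q)⁻¹·Σ_{j=0}^{k−1} σ^j·(−1)^{k−j+1}·t for 1 ≤ k ≤ m. Then for every 1 ≤ k ≤ m one has the factorization (Π_{l=1}^{k} l̂_q)·σ^k = Π_{j=0}^{k−1} (t − ĵ_q·1). -/
/-- The quantum integer `k̂_q = Σ_{i=1}^{k} q^{−2i+2}` (so `0̂_q = 0` and `1̂_q = 1`). -/
noncomputable def qInt {K : Type*} [Field K] (q : K) (k : ℕ) : K :=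
  ∑ i ∈ Finset.range k, q ^ (-(2 * i : ℤ))

/-- In a commutative `K`-algebra `C`, for the recursion `σ⁰ = 1`,
`σ^k = (k̂_q)⁻¹·Σ_{j=0}^{k−1} σ^j·(−1)^{k−j+1}·t`, one has the factorization
`(Π_{l=1}^{k} l̂_q)·σ^k = Π_{j=0}^{k−1} (t − ĵ_q·1)` for `1 ≤ k ≤ m`. -/
theorem sigma_factorization (K : Type*) [Field K] (q : K) (hq : q ≠ 0) (m : ℕ)
    (C : Type*) [CommRing C] [Algebra K C] (t : C)
    (hqInt : ∀ k : ℕ, 1 ≤ k → k ≤ m → qInt q k ≠ 0)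
    (σ : ℕ → C) (hσ0 : σ 0 = 1)
    (hσ : ∀ k : ℕ, 1 ≤ k → k ≤ m →
      σ k = (qInt q k)⁻¹ • ∑ j ∈ Finset.range k, ((-1 : K) ^ (k - j + 1)) • (σ j * t)) :
    ∀ k : ℕ, 1 ≤ k → k ≤ m →
      (∏ l ∈ Finset.Icc 1 k, qInt q l) • σ k
        = ∏ j ∈ Finset.range k, (t - algebraMap K C (qInt q j)) := by
  -- abbreviate the alternating sums
  set S : ℕ → C := fun k => ∑ j ∈ Finset.range (k+1), ((-1 : K) ^ (k - j)) • σ j with hS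
  -- σ (k+1) = (qInt q (k+1))⁻¹ • (S k * t)
  have hσ' : ∀ k : ℕ, k + 1 ≤ m → σ (k+1) = (qInt q (k+1))⁻¹ • (S k * t) := by
    intro k hk
    rw [hσ (k+1) (Nat.le_add_left 1 k) hk]
    congr 1
    rw [hS, Finset.sum_mul]
    refine Finset.sum_congr rfl fun j hj => ?_
    rw [Finset.mem_range] at hj
    have h1 : k + 1 - j + 1 = (k - j) + 2 := by omega
    rw [h1, smul_mul_assoc, pow_add]
    norm_num
  -- key induction
  have key : ∀ k : ℕ, k ≤ m →
      (∏ l ∈ Finset.Icc 1 k, qInt q l) • S k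
        = ∏ j ∈ Finset.Icc 1 k, (t - algebraMap K C (qInt q j)) := by
    intro k
    induction k with
    | zero => simp [hS, hσ0]
    | succ k ih =>
      intro hk
      have hkm : k ≤ m := Nat.le_of_succ_le hk
      have hne : qInt q (k+1) ≠ 0 := hqInt (k+1) (Nat.le_add_left 1 k) hk
      -- S (k+1) = σ (k+1) - S k
      have hsplit : S (k+1) = σ (k+1) - S k := by
        show (∑ j ∈ Finset.range (k+1+1), ((-1 : K) ^ (k + 1 - j)) • σ j)
            = σ (k+1) - ∑ j ∈ Finset.range (k+1), ((-1 : K) ^ (k - j)) • σ j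
        rw [Finset.sum_range_succ]
        have h0 : (k + 1 - (k + 1)) = 0 := by omega
        rw [h0, pow_zero, one_smul]
        have h1 : (∑ j ∈ Finset.range (k+1), ((-1 : K) ^ (k + 1 - j)) • σ j)
            = - ∑ j ∈ Finset.range (k+1), ((-1 : K) ^ (k - j)) • σ j := by
          rw [← Finset.sum_neg_distrib]
          refine Finset.sum_congr rfl fun j hj => ?_
          rw [Finset.mem_range] at hj
          have h2 : k + 1 - j = (k - j) + 1 := by omega
          rw [h2, pow_succ]
          simp
        rw [h1]
        ring
      have hprod : (∏ l ∈ Finset.Icc 1 (k+1), qInt q l)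
          = (∏ l ∈ Finset.Icc 1 k, qInt q l) * qInt q (k+1) :=
        Finset.prod_Icc_succ_top (Nat.le_add_left 1 k) _
      have hσk : (∏ l ∈ Finset.Icc 1 (k+1), qInt q l) • σ (k+1)
          = (∏ j ∈ Finset.Icc 1 k, (t - algebraMap K C (qInt q j))) * t := by
        rw [hσ' k hk, hprod, smul_smul, mul_assoc, mul_inv_cancel₀ hne, mul_one,
          ← smul_mul_assoc, ih hkm]
      rw [hsplit, smul_sub, hσk, hprod, mul_comm (∏ l ∈ Finset.Icc 1 k, qInt q l),
        mul_smul, ih hkm,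
        Finset.prod_Icc_succ_top (Nat.le_add_left 1 k)]
      rw [Algebra.smul_def]
      ring
  intro k hk1 hkm
  obtain ⟨j, rfl⟩ : ∃ j, k = j + 1 := ⟨k - 1, by omega⟩
  have hne : qInt q (j+1) ≠ 0 := hqInt (j+1) hk1 hkm
  have hσk : (∏ l ∈ Finset.Icc 1 (j+1), qInt q l) • σ (j+1)
      = (∏ i ∈ Finset.Icc 1 j, (t - algebraMap K C (qInt q i))) * t := by
    rw [hσ' j hkm, Finset.prod_Icc_succ_top (Nat.le_add_left 1 j), smul_smul,
      mul_assoc, mul_inv_cancel₀ hne, mul_one, ← smul_mul_assoc, key j (by omega)]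
  rw [hσk, Finset.prod_range_succ']
  have h0 : qInt q 0 = 0 := by simp [qInt]
  rw [h0, map_zero, sub_zero]
  rw [← Finset.Ico_add_one_right_eq_Icc, Finset.prod_Ico_eq_prod_range]
  simp [add_comm]
end
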